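/- Let n ≥ 1 and let f_i : ℝ^d → ℝ (i = 1, …, n) be differentiable functions each with L-Lipschitz gradient, set f := (1/n)·∑_{i=1}^n f_i, assume f is μ-strongly convex for some μ > 0, and let w* be a global minimizer of f. Then for all w, w̃ ∈ ℝ^d, (1/n)·∑_{i=1}^n ‖∇f_i(w) − ∇f_i(w̃) + ∇f(w̃)‖² ≤ (4L²/μ)·(f(w) − f(w*)) + (4L²/μ)·(f(w̃) − f(w*)). -/

import Mathlib

open scoped RealInnerProductSpace

lemma stmt_11_aux (L μ A : ℝ) (hμ : μ ≠ 0) : 4 * L ^ 2 / μ * (μ / 2 * A) = 2 * L ^ 2 * A := by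
  field_simp; ring

set_option maxHeartbeats 1000000 in
theorem stmt_11 (d n : ℕ) (hn : 1 ≤ n) (L : ℝ) (hL : 0 ≤ L)
    (f : Fin n → EuclideanSpace ℝ (Fin d) → ℝ)
    (hdiff : ∀ i, Differentiable ℝ (f i))
    (hlip : ∀ i (w w' : EuclideanSpace ℝ (Fin d)),
      ‖gradient (f i) w - gradient (f i) w'‖ ≤ L * ‖w - w'‖)
    (F : EuclideanSpace ℝ (Fin d) → ℝ) (hF : F = fun w => (1 / n : ℝ) * ∑ i, f i w)
    (μ : ℝ) (hμ : 0 < μ)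
    (hsc : ∀ w w' : EuclideanSpace ℝ (Fin d),
      F w ≥ F w' + ⟪gradient F w', w - w'⟫ + μ / 2 * ‖w - w'‖ ^ 2)
    (wstar : EuclideanSpace ℝ (Fin d)) (hmin : ∀ w, F wstar ≤ F w) :
    ∀ w wt : EuclideanSpace ℝ (Fin d),
      (1 / n : ℝ) * ∑ i, ‖gradient (f i) w - gradient (f i) wt + gradient F wt‖ ^ 2 ≤
        4 * L ^ 2 / μ * (F w - F wstar) + 4 * L ^ 2 / μ * (F wt - F wstar) := by
  have hnpos : (0:ℝ) < n := by exact_mod_cast hn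
  -- F is differentiable with gradient (1/n) • ∑ ∇ f_i
  have hgF : ∀ x, HasGradientAt F ((n:ℝ)⁻¹ • ∑ i, gradient (f i) x) x := by
    intro x
    rw [hasGradientAt_iff_hasFDerivAt]
    have h1 : (InnerProductSpace.toDual ℝ (EuclideanSpace ℝ (Fin d)))
        ((n:ℝ)⁻¹ • ∑ i, gradient (f i) x) = (n:ℝ)⁻¹ • ∑ i, fderiv ℝ (f i) x := by
      rw [map_smul, map_sum]
      congr 1
      refine Finset.sum_congr rfl fun i _ => ?_
      simp [gradient, LinearIsometryEquiv.apply_symm_apply]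
    rw [h1, hF]
    have h2 : HasFDerivAt (fun w => ∑ i, f i w) (∑ i, fderiv ℝ (f i) x) x :=
      HasFDerivAt.fun_sum fun i _ => (hdiff i x).hasFDerivAt
    have h3 := h2.const_smul ((n:ℝ)⁻¹)
    simpa [one_div, smul_eq_mul, Pi.smul_def] using h3
  have hgradF : ∀ x, gradient F x = (n:ℝ)⁻¹ • ∑ i, gradient (f i) x :=
    fun x => (hgF x).gradient
  -- gradient at minimizer is zero
  have hg0 : gradient F wstar = 0 := by
    have hloc : IsLocalMin F wstar := Filter.Eventually.of_forall hmin
    have := hloc.hasFDerivAt_eq_zero (hgF wstar).hasFDerivAt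
    have h0 : (n:ℝ)⁻¹ • ∑ i, gradient (f i) wstar = 0 := by
      apply (InnerProductSpace.toDual ℝ (EuclideanSpace ℝ (Fin d))).injective
      simpa using this
    rw [hgradF wstar, h0]
  -- quadratic growth
  have hq : ∀ x, μ / 2 * ‖x - wstar‖ ^ 2 ≤ F x - F wstar := by
    intro x
    have := hsc x wstar
    rw [hg0] at this
    simp only [inner_zero_left] at this
    linarith
  intro w wt
  set m := gradient F wt with hm
  set a : Fin n → EuclideanSpace ℝ (Fin d) := fun i => gradient (f i) w - gradient (f i) wstar
  set b : Fin n → EuclideanSpace ℝ (Fin d) := fun i => gradient (f i) wt - gradient (f i) wstar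
  have hsumb : ∑ i, b i = (n:ℝ) • m := by
    have h1 : gradient F wt - gradient F wstar = (n:ℝ)⁻¹ • ∑ i, b i := by
      rw [hgradF wt, hgradF wstar, ← smul_sub, ← Finset.sum_sub_distrib]
    rw [hg0, sub_zero] at h1
    rw [← hm] at h1
    rw [h1, smul_smul]
    rw [mul_inv_cancel₀ (ne_of_gt hnpos), one_smul]
  -- variance bound
  have hvar : ∑ i, ‖b i - m‖ ^ 2 ≤ ∑ i, ‖b i‖ ^ 2 := by
    have hexp : ∀ i : Fin n, ‖b i - m‖ ^ 2 = ‖b i‖ ^ 2 - 2 * ⟪b i, m⟫ + ‖m‖ ^ 2 :=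
      fun i => norm_sub_sq_real (b i) m
    have hin : ∑ i, ⟪b i, m⟫ = (n:ℝ) * ‖m‖ ^ 2 := by
      rw [← sum_inner, hsumb, real_inner_smul_left, real_inner_self_eq_norm_sq]
    calc ∑ i, ‖b i - m‖ ^ 2 = ∑ i, ‖b i‖ ^ 2 - 2 * ((n:ℝ) * ‖m‖^2) + (n:ℝ) * ‖m‖^2 := by
          simp only [hexp, Finset.sum_add_distrib, Finset.sum_sub_distrib, ← Finset.mul_sum, hin]
          simp [Finset.card_univ, mul_comm]
      _ ≤ ∑ i, ‖b i‖ ^ 2 := by nlinarith [sq_nonneg ‖m‖, hnpos]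
  -- pointwise bound
  have hpt : ∀ i : Fin n, ‖gradient (f i) w - gradient (f i) wt + m‖ ^ 2 ≤
      2 * ‖a i‖ ^ 2 + 2 * ‖b i - m‖ ^ 2 := by
    intro i
    have hid : gradient (f i) w - gradient (f i) wt + m = a i - (b i - m) := by
      simp only [a, b]; abel
    rw [hid]
    have h1 : ‖a i - (b i - m)‖ ≤ ‖a i‖ + ‖b i - m‖ := norm_sub_le _ _
    have h2 : ‖a i - (b i - m)‖ ^ 2 ≤ (‖a i‖ + ‖b i - m‖) ^ 2 :=
      pow_le_pow_left₀ (norm_nonneg _) h1 2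
    nlinarith [sq_nonneg (‖a i‖ - ‖b i - m‖)]
  have hai : ∀ i : Fin n, ‖a i‖ ^ 2 ≤ L ^ 2 * ‖w - wstar‖ ^ 2 := by
    intro i
    have h1 : ‖a i‖ ≤ L * ‖w - wstar‖ := hlip i w wstar
    calc ‖a i‖ ^ 2 ≤ (L * ‖w - wstar‖) ^ 2 := pow_le_pow_left₀ (norm_nonneg _) h1 2
      _ = L ^ 2 * ‖w - wstar‖ ^ 2 := by ring
  have hbi : ∀ i : Fin n, ‖b i‖ ^ 2 ≤ L ^ 2 * ‖wt - wstar‖ ^ 2 := by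
    intro i
    have h1 : ‖b i‖ ≤ L * ‖wt - wstar‖ := hlip i wt wstar
    calc ‖b i‖ ^ 2 ≤ (L * ‖wt - wstar‖) ^ 2 := pow_le_pow_left₀ (norm_nonneg _) h1 2
      _ = L ^ 2 * ‖wt - wstar‖ ^ 2 := by ring
  have hsum : ∑ i, ‖gradient (f i) w - gradient (f i) wt + m‖ ^ 2 ≤
      (n:ℝ) * (2 * L ^ 2 * ‖w - wstar‖ ^ 2 + 2 * L ^ 2 * ‖wt - wstar‖ ^ 2) := by
    calc ∑ i, ‖gradient (f i) w - gradient (f i) wt + m‖ ^ 2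
        ≤ ∑ i, (2 * ‖a i‖ ^ 2 + 2 * ‖b i - m‖ ^ 2) := Finset.sum_le_sum fun i _ => hpt i
      _ = 2 * ∑ i, ‖a i‖ ^ 2 + 2 * ∑ i, ‖b i - m‖ ^ 2 := by
          rw [Finset.sum_add_distrib, ← Finset.mul_sum, ← Finset.mul_sum]
      _ ≤ 2 * ((n:ℝ) * (L ^ 2 * ‖w - wstar‖ ^ 2)) + 2 * ((n:ℝ) * (L ^ 2 * ‖wt - wstar‖ ^ 2)) := by
          gcongr
          · calc ∑ i, ‖a i‖ ^ 2 ≤ ∑ _i : Fin n, L ^ 2 * ‖w - wstar‖ ^ 2 :=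
                Finset.sum_le_sum fun i _ => hai i
              _ = (n:ℝ) * (L ^ 2 * ‖w - wstar‖ ^ 2) := by simp [Finset.card_univ, mul_comm]
          · calc ∑ i, ‖b i - m‖ ^ 2 ≤ ∑ i, ‖b i‖ ^ 2 := hvar
              _ ≤ ∑ _i : Fin n, L ^ 2 * ‖wt - wstar‖ ^ 2 := Finset.sum_le_sum fun i _ => hbi i
              _ = (n:ℝ) * (L ^ 2 * ‖wt - wstar‖ ^ 2) := by simp [Finset.card_univ, mul_comm]
      _ = (n:ℝ) * (2 * L ^ 2 * ‖w - wstar‖ ^ 2 + 2 * L ^ 2 * ‖wt - wstar‖ ^ 2) := by ring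
  have hfinal : (1 / n : ℝ) * ∑ i, ‖gradient (f i) w - gradient (f i) wt + m‖ ^ 2 ≤
      2 * L ^ 2 * ‖w - wstar‖ ^ 2 + 2 * L ^ 2 * ‖wt - wstar‖ ^ 2 := by
    rw [div_mul_eq_mul_div, one_mul, div_le_iff₀ hnpos]
    linarith [hsum]
  have h1 := hq w
  have h2 := hq wt
  have hL2 : (0:ℝ) ≤ L ^ 2 := sq_nonneg L
  calc (1 / n : ℝ) * ∑ i, ‖gradient (f i) w - gradient (f i) wt + gradient F wt‖ ^ 2
      ≤ 2 * L ^ 2 * ‖w - wstar‖ ^ 2 + 2 * L ^ 2 * ‖wt - wstar‖ ^ 2 := hfinal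
    _ ≤ 4 * L ^ 2 / μ * (F w - F wstar) + 4 * L ^ 2 / μ * (F wt - F wstar) := by
        have hc : (0:ℝ) ≤ 4 * L ^ 2 / μ := by positivity
        have k1 := mul_le_mul_of_nonneg_left h1 hc
        have k2 := mul_le_mul_of_nonneg_left h2 hc
        have e1 : 4 * L ^ 2 / μ * (μ / 2 * ‖w - wstar‖ ^ 2) = 2 * L ^ 2 * ‖w - wstar‖ ^ 2 := stmt_11_aux L μ _ (ne_of_gt hμ)
        have e2 : 4 * L ^ 2 / μ * (μ / 2 * ‖wt - wstar‖ ^ 2) = 2 * L ^ 2 * ‖wt - wstar‖ ^ 2 := stmt_11_aux L μ _ (ne_of_gt hμ)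
        rw [e1] at k1; rw [e2] at k2
        linarith
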